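/- Let n be a natural number and let p, q, r : Fin n → ℝ satisfy 0 ≤ p(v), 0 ≤ q(v), p(v) + q(v) ≤ 1 and p(v) + q(v) > 0 for every item v. Define the score s(v) = p(v)·r(v)/(p(v)+q(v)). If σ is a permutation of Fin n that orders the items by non-increasing score, i.e. for all positions i ≤ i' one has s(σ(i)) ≥ s(σ(i')), then σ maximizes the cascade objective: for every permutation τ of Fin n, F(σ) ≥ F(τ). -/

import Mathlib

open Finset

/-- Cascade click probability of the item at position `i` under ranking `σ`:
`P^i(σ) = (∏_{j<i} (1 − p(σ j) − q(σ j))) · p(σ i)`. -/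
noncomputable def cascadeProb {n : ℕ} (p q : Fin n → ℝ) (σ : Equiv.Perm (Fin n))
    (i : Fin n) : ℝ :=
  (∏ j ∈ Finset.Iio i, (1 - p (σ j) - q (σ j))) * p (σ i)

/-- Cascade objective: `F(σ) = Σ_i P^i(σ) · r(σ i)`. -/
noncomputable def cascadeF {n : ℕ} (p q r : Fin n → ℝ) (σ : Equiv.Perm (Fin n)) : ℝ :=
  ∑ i : Fin n, cascadeProb p q σ i * r (σ i)

namespace CascadeAux

variable {n : ℕ}

/-- The set of inversions of a permutation of `Fin n`. -/
def invs (ρ : Equiv.Perm (Fin n)) : Finset (Fin n × Fin n) :=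
  (univ ×ˢ univ).filter (fun x => x.1 < x.2 ∧ ρ x.2 < ρ x.1)

lemma eq_one_of_no_descent (ρ : Equiv.Perm (Fin n))
    (h : ∀ i i' : Fin n, (i' : ℕ) = (i : ℕ) + 1 → ρ i ≤ ρ i') : ρ = 1 := by
  cases n with
  | zero => exact Equiv.ext fun i => i.elim0
  | succ m =>
    have hsm : StrictMono ρ := by
      rw [Fin.strictMono_iff_lt_succ]
      intro i
      have h1 : ((i.succ : Fin (m+1)) : ℕ) = ((i.castSucc : Fin (m+1)) : ℕ) + 1 := by
        simp
      have h2 := h i.castSucc i.succ h1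
      have h3 : i.castSucc ≠ i.succ := by
        intro hc
        have := congrArg (Fin.val) hc
        simp at this
      exact lt_of_le_of_ne h2 (fun hc => h3 (ρ.injective hc))
    have hiso : Fin (m+1) ≃o Fin (m+1) :=
      StrictMono.orderIsoOfSurjective ρ hsm ρ.surjective
    ext i
    have := Fin.coe_orderIso_apply (StrictMono.orderIsoOfSurjective ρ hsm ρ.surjective) i
    simpa using this

lemma exists_descent (ρ : Equiv.Perm (Fin n)) (hρ : ρ ≠ 1) :
    ∃ i i' : Fin n, (i' : ℕ) = (i : ℕ) + 1 ∧ ρ i' < ρ i := by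
  by_contra hc
  push_neg at hc
  exact hρ (eq_one_of_no_descent ρ fun i i' hii' => hc i i' hii')

lemma swap_lt_swap {a b i i' : Fin n} (hii' : (i' : ℕ) = (i : ℕ) + 1)
    (hab : a < b) (hne : ¬(a = i ∧ b = i')) :
    Equiv.swap i i' a < Equiv.swap i i' b := by
  have key : ∀ x : Fin n, ((Equiv.swap i i' x : Fin n) : ℕ) =
      if (x : ℕ) = (i : ℕ) then (i' : ℕ) else if (x : ℕ) = (i' : ℕ) then (i : ℕ)
      else (x : ℕ) := by
    intro x
    by_cases hx : x = i
    · subst hx; rw [Equiv.swap_apply_left, if_pos rfl]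
    · by_cases hx' : x = i'
      · subst hx'; rw [Equiv.swap_apply_right, if_neg (fun h => hx (Fin.ext h)), if_pos rfl]
      · rw [Equiv.swap_apply_of_ne_of_ne hx hx', if_neg (fun h => hx (Fin.ext h)),
          if_neg (fun h => hx' (Fin.ext h))]
  rw [Fin.lt_def, key a, key b]
  rw [Fin.lt_def] at hab
  simp only [Fin.ext_iff] at hne
  split_ifs <;> omega

lemma card_invs_swap_lt (ρ : Equiv.Perm (Fin n)) (i i' : Fin n)
    (hii' : (i' : ℕ) = (i : ℕ) + 1) (hdes : ρ i' < ρ i) :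
    (invs (ρ * Equiv.swap i i')).card < (invs ρ).card := by
  have hlt : i < i' := by rw [Fin.lt_def]; omega
  have hmem : (i, i') ∈ invs ρ := by
    simp [invs, hlt, hdes]
  have hmaps : ∀ x ∈ invs (ρ * Equiv.swap i i'),
      (Equiv.swap i i' x.1, Equiv.swap i i' x.2) ∈ (invs ρ).erase (i, i') := by
    rintro ⟨a, b⟩ hx
    rw [invs, Finset.mem_filter] at hx
    simp only [invs, mem_filter, mem_product, mem_univ, true_and,
      Equiv.Perm.mul_apply] at hx
    obtain ⟨hab, hinv⟩ := hx
    have hnab : ¬(a = i ∧ b = i') := by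
      rintro ⟨rfl, rfl⟩
      rw [Equiv.swap_apply_right, Equiv.swap_apply_left] at hinv
      exact absurd hinv (not_lt.mpr (le_of_lt hdes))
    refine Finset.mem_erase.mpr ⟨?_, ?_⟩
    · rintro hc
      rw [Prod.mk.injEq] at hc
      obtain ⟨h1, h2⟩ := hc
      have ha : a = i' := by
        have := congrArg (Equiv.swap i i') h1
        simpa [Equiv.swap_apply_left] using this
      have hb : b = i := by
        have := congrArg (Equiv.swap i i') h2
        simpa [Equiv.swap_apply_right] using this
      subst ha; subst hb
      exact absurd hab (not_lt.mpr (le_of_lt hlt))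
    · simp only [invs, mem_filter, mem_product, mem_univ, true_and]
      exact ⟨swap_lt_swap hii' hab hnab, hinv⟩
  have hinj : Set.InjOn (fun x : Fin n × Fin n => (Equiv.swap i i' x.1, Equiv.swap i i' x.2))
      (invs (ρ * Equiv.swap i i')) := by
    rintro ⟨a, b⟩ _ ⟨c, d⟩ _ h
    rw [Prod.mk.injEq] at h ⊢
    exact ⟨(Equiv.swap i i').injective h.1, (Equiv.swap i i').injective h.2⟩
  calc (invs (ρ * Equiv.swap i i')).card
      ≤ ((invs ρ).erase (i, i')).card := Finset.card_le_card_of_injOn _ hmaps hinj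
    _ < (invs ρ).card := Finset.card_erase_lt_of_mem hmem

lemma cascadeF_swap_le (p q r : Fin n → ℝ)
    (hp : ∀ v, 0 ≤ p v) (hq : ∀ v, 0 ≤ q v) (hpq_le : ∀ v, p v + q v ≤ 1)
    (hpq_pos : ∀ v, 0 < p v + q v)
    (τ : Equiv.Perm (Fin n)) (i i' : Fin n) (hii' : (i' : ℕ) = (i : ℕ) + 1)
    (hs : p (τ i) * r (τ i) / (p (τ i) + q (τ i)) ≤
          p (τ i') * r (τ i') / (p (τ i') + q (τ i'))) :
    cascadeF p q r τ ≤ cascadeF p q r (τ * Equiv.swap i i') := by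
  set τ' := τ * Equiv.swap i i' with hτ'
  have hne : i' ≠ i := fun h => by rw [h] at hii'; omega
  have hτ'i : τ' i = τ i' := by simp [hτ', Equiv.swap_apply_left]
  have hτ'i' : τ' i' = τ i := by simp [hτ', Equiv.swap_apply_right]
  have hτ'j : ∀ j : Fin n, j ≠ i → j ≠ i' → τ' j = τ j := fun j h1 h2 => by
    simp [hτ', Equiv.swap_apply_of_ne_of_ne h1 h2]
  -- the prefix product before position i is unchanged
  have hW : (∏ j ∈ Finset.Iio i, (1 - p (τ' j) - q (τ' j)))
      = ∏ j ∈ Finset.Iio i, (1 - p (τ j) - q (τ j)) := by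
    refine Finset.prod_congr rfl fun j hj => ?_
    rw [Finset.mem_Iio] at hj
    rw [hτ'j j (ne_of_lt hj) (fun h => by rw [Fin.lt_def] at hj; rw [h] at hj; omega)]
  have hIio : Finset.Iio i' = insert i (Finset.Iio i) := by
    ext j
    simp only [Finset.mem_Iio, Finset.mem_insert, Fin.lt_def, Fin.ext_iff]
    omega
  have hinotmem : i ∉ Finset.Iio i := by simp
  set W := ∏ j ∈ Finset.Iio i, (1 - p (τ j) - q (τ j)) with hWdef
  have hWnn : 0 ≤ W := Finset.prod_nonneg fun j _ => by
    have := hpq_le (τ j); linarith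
  -- split both sums
  set g := fun j => cascadeProb p q τ j * r (τ j) with hg
  set g' := fun j => cascadeProb p q τ' j * r (τ' j) with hg'
  have hmem1 : i' ∈ (univ : Finset (Fin n)) := mem_univ _
  have hmem2 : i ∈ (univ : Finset (Fin n)).erase i' :=
    Finset.mem_erase.mpr ⟨(fun h => hne h.symm), mem_univ _⟩
  have hsplit : ∀ f : Fin n → ℝ, ∑ j : Fin n, f j
      = (∑ j ∈ ((univ : Finset (Fin n)).erase i').erase i, f j) + f i + f i' := by
    intro f
    rw [← Finset.sum_erase_add univ f hmem1, ← Finset.sum_erase_add _ f hmem2]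
  have hrest : ∀ j ∈ ((univ : Finset (Fin n)).erase i').erase i, g' j = g j := by
    intro j hj
    rw [Finset.mem_erase, Finset.mem_erase] at hj
    obtain ⟨hji, hji', -⟩ := hj
    have hval : (j : ℕ) < (i : ℕ) ∨ (i' : ℕ) < (j : ℕ) := by
      have h1 : (j : ℕ) ≠ (i : ℕ) := fun h => hji (Fin.ext h)
      have h2 : (j : ℕ) ≠ (i' : ℕ) := fun h => hji' (Fin.ext h)
      omega
    have hτ'jj : τ' j = τ j := hτ'j j hji hji'
    have hprod : (∏ k ∈ Finset.Iio j, (1 - p (τ' k) - q (τ' k)))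
        = ∏ k ∈ Finset.Iio j, (1 - p (τ k) - q (τ k)) := by
      rcases hval with hlt | hgt
      · refine Finset.prod_congr rfl fun k hk => ?_
        rw [Finset.mem_Iio, Fin.lt_def] at hk
        rw [hτ'j k (fun h => by rw [h] at hk; omega) (fun h => by rw [h] at hk; omega)]
      · have : (∏ k ∈ Finset.Iio j, (1 - p (τ (Equiv.swap i i' k)) - q (τ (Equiv.swap i i' k))))
            = ∏ k ∈ Finset.Iio j, (1 - p (τ k) - q (τ k)) := by
          refine Equiv.Perm.prod_comp (Equiv.swap i i') (Finset.Iio j)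
            (fun v => 1 - p (τ v) - q (τ v)) ?_
          intro a ha
          simp only [Set.mem_setOf_eq] at ha
          have : a = i ∨ a = i' := by
            by_contra hc
            push_neg at hc
            exact ha (Equiv.swap_apply_of_ne_of_ne hc.1 hc.2)
          rcases this with rfl | rfl <;>
            · simp only [Finset.coe_Iio, Set.mem_Iio, Fin.lt_def]; omega
        exact this
    simp only [hg, hg', cascadeProb, hτ'jj, hprod]
  have hpair : g' i + g' i' - (g i + g i')
      = W * ((p (τ i') * r (τ i')) * (p (τ i) + q (τ i))
           - (p (τ i) * r (τ i)) * (p (τ i') + q (τ i'))) := by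
    have hWi' : (∏ j ∈ Finset.Iio i', (1 - p (τ j) - q (τ j)))
        = (1 - p (τ i) - q (τ i)) * W := by
      rw [hIio, Finset.prod_insert hinotmem]
    have hW'i' : (∏ j ∈ Finset.Iio i', (1 - p (τ' j) - q (τ' j)))
        = (1 - p (τ i') - q (τ i')) * W := by
      rw [hIio, Finset.prod_insert hinotmem, hτ'i, hW]
    simp only [hg, hg', cascadeProb, hτ'i, hτ'i', hW, hWi', hW'i']
    ring
  have hkey : (p (τ i) * r (τ i)) * (p (τ i') + q (τ i'))
      ≤ (p (τ i') * r (τ i')) * (p (τ i) + q (τ i)) :=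
    (div_le_div_iff₀ (hpq_pos (τ i)) (hpq_pos (τ i'))).mp hs
  have hdiff : 0 ≤ g' i + g' i' - (g i + g i') := by
    rw [hpair]
    exact mul_nonneg hWnn (by linarith)
  have hFτ : cascadeF p q r τ
      = (∑ j ∈ ((univ : Finset (Fin n)).erase i').erase i, g j) + g i + g i' := hsplit g
  have hFτ' : cascadeF p q r τ'
      = (∑ j ∈ ((univ : Finset (Fin n)).erase i').erase i, g' j) + g' i + g' i' := hsplit g'
  rw [hFτ, hFτ', Finset.sum_congr rfl hrest]
  linarith

end CascadeAux

open CascadeAux in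
/-- If `σ` orders the items by non-increasing score
`s(v) = p(v)·r(v)/(p(v)+q(v))`, then `σ` maximizes the cascade objective. -/
theorem sorted_by_score_maximizes_cascade (n : ℕ) (p q r : Fin n → ℝ)
    (hp : ∀ v, 0 ≤ p v) (hq : ∀ v, 0 ≤ q v)
    (hpq_le : ∀ v, p v + q v ≤ 1) (hpq_pos : ∀ v, 0 < p v + q v)
    (σ : Equiv.Perm (Fin n))
    (hsorted : ∀ i i' : Fin n, i ≤ i' →
      p (σ i) * r (σ i) / (p (σ i) + q (σ i)) ≥
        p (σ i') * r (σ i') / (p (σ i') + q (σ i'))) :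
    ∀ τ : Equiv.Perm (Fin n), cascadeF p q r σ ≥ cascadeF p q r τ := by
  suffices H : ∀ m (τ : Equiv.Perm (Fin n)), (invs (σ⁻¹ * τ)).card ≤ m →
      cascadeF p q r τ ≤ cascadeF p q r σ by
    intro τ; exact H _ τ le_rfl
  intro m
  induction m with
  | zero =>
    intro τ hcard
    by_cases hρ : σ⁻¹ * τ = 1
    · rw [inv_mul_eq_one.mp hρ]
    · obtain ⟨i, i', hii', hdes⟩ := exists_descent _ hρ
      have hmem : (i, i') ∈ invs (σ⁻¹ * τ) := by
        simp only [invs, mem_filter, mem_product, mem_univ, true_and]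
        exact ⟨by rw [Fin.lt_def]; omega, hdes⟩
      have := Finset.card_pos.mpr ⟨_, hmem⟩
      omega
  | succ m ih =>
    intro τ hcard
    by_cases hρ : σ⁻¹ * τ = 1
    · rw [inv_mul_eq_one.mp hρ]
    · obtain ⟨i, i', hii', hdes⟩ := exists_descent _ hρ
      have happ : ∀ x : Fin n, σ ((σ⁻¹ * τ) x) = τ x := by
        intro x; simp
      have hs : p (τ i) * r (τ i) / (p (τ i) + q (τ i)) ≤
          p (τ i') * r (τ i') / (p (τ i') + q (τ i')) := by
        have := hsorted ((σ⁻¹ * τ) i') ((σ⁻¹ * τ) i) (le_of_lt hdes)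
        rw [happ, happ] at this
        exact this
      have hstep := cascadeF_swap_le p q r hp hq hpq_le hpq_pos τ i i' hii' hs
      have hcard' : (invs (σ⁻¹ * (τ * Equiv.swap i i'))).card ≤ m := by
        have hlt := card_invs_swap_lt (σ⁻¹ * τ) i i' hii' hdes
        rw [← mul_assoc] at *
        omega
      exact le_trans hstep (ih (τ * Equiv.swap i i') hcard')
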